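/- Let n ≥ 4 and consider the extended Dynkin graph D̃_n with vertex set V = {a₁, a₂, b₁, b₂, z₁, …, z_{n−3}} and edges a₁–z₁, a₂–z₁, z_k–z_{k+1} for 1 ≤ k ≤ n−4, z_{n−3}–b₁, z_{n−3}–b₂. Bipartition V = V⁰ ⊔ V¹ by placing z_k in V^{k mod 2}, a₁, a₂ in V⁰, and b₁, b₂ in the class not containing z_{n−3}. For v ∈ V define the reflection σ_v : ℤ^V → ℤ^V by (σ_v x)_v = −x_v + Σ_{u adjacent to v} x_u and (σ_v x)_u = x_u for u ≠ v; let ĉ be the composite of the σ_v over v ∈ V¹ (these commute since V¹ is an independent set) and č the composite over v ∈ V⁰. Let δ ∈ ℤ^V be given by δ_{a₁} = δ_{a₂} = δ_{b₁} = δ_{b₂} = 1 and δ_{z_k} = 2. Then for every d ∈ ℤ^V with d_v ≥ 1 for all v, q(d) = 1, and d_v ≤ δ_v for all v, there exists a finite alternating composition w of the transformations ĉ and č such that (w d)_v = 0 for some vertex v ∈ V. -/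

import Mathlib

/-- The vertex set of the extended Dynkin graph `D̃ₙ` (`n ≥ 4`): the four end
vertices `a₁, a₂, b₁, b₂` and the chain vertices `z₁, …, z_{n-3}` (0-indexed here:
`z k` stands for `z_{k+1}`). -/
inductive DTildeVertex (n : ℕ) where
  | a1 : DTildeVertex n
  | a2 : DTildeVertex n
  | b1 : DTildeVertex n
  | b2 : DTildeVertex n
  | z : Fin (n - 3) → DTildeVertex n
  deriving DecidableEq, Fintype

namespace DTildeVertex

variable {n : ℕ}

/-- Each edge of `D̃ₙ`, listed once (with a fixed orientation):
`a₁–z₁`, `a₂–z₁`, `z_k–z_{k+1}` for `1 ≤ k ≤ n-4`, `z_{n-3}–b₁`, `z_{n-3}–b₂`. -/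
def edgeO : DTildeVertex n → DTildeVertex n → Bool
  | .a1, .z k => k.val == 0
  | .a2, .z k => k.val == 0
  | .z k, .z l => k.val + 1 == l.val
  | .z k, .b1 => k.val == n - 4
  | .z k, .b2 => k.val == n - 4
  | _, _ => false

/-- Adjacency: symmetric closure of the oriented edge list. -/
def adj (u v : DTildeVertex n) : Bool := edgeO u v || edgeO v u

/-- The bipartition class of a vertex: `z k` (i.e. `z_{k+1}`) lies in class
`(k+1) mod 2`, `a₁, a₂` lie in class `0`, and `b₁, b₂` lie in the class not
containing `z_{n-3}` (class `(n-3+1) mod 2 = n mod 2`).  `true` means class `1`. -/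
def parity : DTildeVertex n → Bool
  | .a1 => false
  | .a2 => false
  | .b1 => n % 2 == 1
  | .b2 => n % 2 == 1
  | .z k => (k.val + 1) % 2 == 1

/-- The simple reflection at the vertex `v` acting on `ℤ`-valued functions on the
vertices: `(σ_v x)_v = -x_v + Σ_{u ~ v} x_u` and `(σ_v x)_u = x_u` for `u ≠ v`. -/
def reflect (v : DTildeVertex n) (x : DTildeVertex n → ℤ) : DTildeVertex n → ℤ :=
  fun u => if u = v then -x v + ∑ w, (if adj v w then x w else 0) else x u

/-- The Coxeter reflection `ĉ`: the composite of the simple reflections `σ_v` over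
all vertices `v` in class `1`.  Since class `1` is an independent set these
reflections commute, and their composite is the simultaneous update below. -/
def cOdd (x : DTildeVertex n → ℤ) : DTildeVertex n → ℤ :=
  fun u => if parity u then -x u + ∑ w, (if adj u w then x w else 0) else x u

/-- The Coxeter reflection `č`: the composite of the simple reflections `σ_v` over
all vertices `v` in class `0`. -/
def cEven (x : DTildeVertex n → ℤ) : DTildeVertex n → ℤ :=
  fun u => if parity u then x u else -x u + ∑ w, (if adj u w then x w else 0)

/-- Alternating composition of the Coxeter reflections `ĉ` and `č` of length `k`,
starting with `ĉ` if `b = true` and with `č` otherwise. -/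
def altIter (b : Bool) : ℕ → (DTildeVertex n → ℤ) → (DTildeVertex n → ℤ)
  | 0, x => x
  | k + 1, x => altIter (!b) k ((if b then cOdd else cEven) x)

/-- The minimal imaginary root `δ` of `D̃ₙ`: value `1` at the four end vertices and
`2` at the chain vertices. -/
def delta : DTildeVertex n → ℤ
  | .a1 => 1
  | .a2 => 1
  | .b1 => 1
  | .b2 => 1
  | .z _ => 2

/-- The Tits form of `D̃ₙ`: `q(x) = Σ_v x_v² − Σ_{edges {u,v}} x_u x_v`. -/
def titsForm (x : DTildeVertex n → ℤ) : ℤ :=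
  (∑ v, x v ^ 2) - ∑ u, ∑ v, (if edgeO u v then x u * x v else 0)

end DTildeVertex
namespace DTildeAux
open DTildeVertex Finset

variable {n : ℕ}

def vequiv (n : ℕ) : DTildeVertex n ≃ (Fin (n-3) ⊕ Fin 4) where
  toFun v := match v with
    | .a1 => .inr 0 | .a2 => .inr 1 | .b1 => .inr 2 | .b2 => .inr 3 | .z k => .inl k
  invFun s := match s with
    | .inl k => .z k
    | .inr ⟨0, _⟩ => .a1
    | .inr ⟨1, _⟩ => .a2
    | .inr ⟨2, _⟩ => .b1
    | .inr ⟨_+3, _⟩ => .b2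
  left_inv v := by cases v <;> rfl
  right_inv s := by
    rcases s with k | ⟨i, hi⟩
    · rfl
    · interval_cases i <;> rfl

lemma sum_decomp (f : DTildeVertex n → ℤ) :
    ∑ v, f v = f .a1 + f .a2 + f .b1 + f .b2 + ∑ k, f (.z k) := by
  rw [← Equiv.sum_comp (vequiv n).symm f]
  simp [Fintype.sum_sum_type, Fin.sum_univ_four, vequiv]
  ring

lemma sum_fin_ite (m : ℕ) (g : Fin m → ℤ) (t : ℕ) :
    ∑ l : Fin m, (if l.val = t then g l else 0) = if h : t < m then g ⟨t, h⟩ else 0 := by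
  split_ifs with h
  · rw [Finset.sum_eq_single ⟨t, h⟩]
    · simp
    · intro l _ hl; rw [if_neg]; intro hv; exact hl (Fin.ext hv)
    · simp
  · apply Finset.sum_eq_zero; intro l _; rw [if_neg]; intro hv; omega

end DTildeAux
namespace DTildeAux
open DTildeVertex Finset

variable {n : ℕ}

lemma adjsum_a1 (hn : 4 ≤ n) (x : DTildeVertex n → ℤ) :
    ∑ w, (if adj .a1 w then x w else 0) = x (.z ⟨0, by omega⟩) := by
  rw [sum_decomp]
  simp only [adj, edgeO, Bool.or_false, Bool.or_self, if_false, Bool.false_or]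
  have : ∀ k : Fin (n-3), (if (k.val == 0 : Bool) then x (.z k) else 0)
      = (if k.val = 0 then x (.z k) else 0) := by intro k; simp
  rw [Finset.sum_congr rfl (fun k _ => this k), sum_fin_ite]
  rw [dif_pos (by omega : 0 < n - 3)]
  simp

lemma adjsum_a2 (hn : 4 ≤ n) (x : DTildeVertex n → ℤ) :
    ∑ w, (if adj .a2 w then x w else 0) = x (.z ⟨0, by omega⟩) := by
  rw [sum_decomp]
  simp only [adj, edgeO, Bool.or_false, Bool.or_self, if_false, Bool.false_or]
  have : ∀ k : Fin (n-3), (if (k.val == 0 : Bool) then x (.z k) else 0)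
      = (if k.val = 0 then x (.z k) else 0) := by intro k; simp
  rw [Finset.sum_congr rfl (fun k _ => this k), sum_fin_ite]
  rw [dif_pos (by omega : 0 < n - 3)]
  simp

lemma adjsum_b1 (hn : 4 ≤ n) (x : DTildeVertex n → ℤ) :
    ∑ w, (if adj .b1 w then x w else 0) = x (.z ⟨n-4, by omega⟩) := by
  rw [sum_decomp]
  simp only [adj, edgeO, Bool.or_false, Bool.or_self, if_false, Bool.false_or]
  have : ∀ k : Fin (n-3), (if (k.val == n-4 : Bool) then x (.z k) else 0)
      = (if k.val = n-4 then x (.z k) else 0) := by intro k; simp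
  rw [Finset.sum_congr rfl (fun k _ => this k), sum_fin_ite]
  rw [dif_pos (by omega : n-4 < n - 3)]
  simp

lemma adjsum_b2 (hn : 4 ≤ n) (x : DTildeVertex n → ℤ) :
    ∑ w, (if adj .b2 w then x w else 0) = x (.z ⟨n-4, by omega⟩) := by
  rw [sum_decomp]
  simp only [adj, edgeO, Bool.or_false, Bool.or_self, if_false, Bool.false_or]
  have : ∀ k : Fin (n-3), (if (k.val == n-4 : Bool) then x (.z k) else 0)
      = (if k.val = n-4 then x (.z k) else 0) := by intro k; simp
  rw [Finset.sum_congr rfl (fun k _ => this k), sum_fin_ite]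
  rw [dif_pos (by omega : n-4 < n - 3)]
  simp

/-- Value of `x` at chain position `t`, with junk value `0` out of range. -/
def zv (x : DTildeVertex n → ℤ) (t : ℕ) : ℤ :=
  if h : t < n-3 then x (.z ⟨t, h⟩) else 0

lemma adjsum_z (hn : 4 ≤ n) (k : Fin (n-3)) (x : DTildeVertex n → ℤ) :
    ∑ w, (if adj (.z k) w then x w else 0) =
      (if k.val = 0 then x .a1 + x .a2 else zv x (k.val - 1)) +
      (if k.val = n-4 then x .b1 + x .b2 else zv x (k.val + 1)) := by
  have hk := k.isLt
  rw [sum_decomp]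
  simp only [adj, edgeO, Bool.or_false, Bool.false_or, Bool.or_self]
  have hsplit : ∀ l : Fin (n-3),
      (if (k.val + 1 == l.val || l.val + 1 == k.val : Bool) then x (.z l) else 0)
      = (if l.val = k.val + 1 then x (.z l) else 0) +
        (if l.val = k.val - 1 ∧ 1 ≤ k.val then x (.z l) else 0) := by
    intro l
    have hl := l.isLt
    simp only [Bool.or_eq_true, beq_iff_eq]
    split_ifs <;> first | ring1 | (exfalso; omega)
  erw [Finset.sum_congr rfl (fun l _ => hsplit l)]
  rw [Finset.sum_add_distrib, sum_fin_ite]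
  have h2 : ∑ l : Fin (n-3), (if l.val = k.val - 1 ∧ 1 ≤ k.val then x (.z l) else 0)
      = if 1 ≤ k.val then zv x (k.val - 1) else 0 := by
    by_cases hk1 : 1 ≤ k.val
    · rw [if_pos hk1]
      simp only [hk1, and_true]
      rw [sum_fin_ite]
      rfl
    · rw [if_neg hk1]
      apply Finset.sum_eq_zero
      intro l _
      rw [if_neg]
      tauto
  rw [h2]
  simp only [beq_iff_eq, zv]
  split_ifs <;> first | ring1 | (exfalso; omega)

end DTildeAux
namespace DTildeAux
open DTildeVertex Finset

variable {n : ℕ}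

lemma zv_z (x : DTildeVertex n → ℤ) (k : Fin (n-3)) : x (.z k) = zv x k.val := by
  simp [zv, k.isLt]

lemma titsForm_eq (hn : 4 ≤ n) (x : DTildeVertex n → ℤ)
    (ha1 : x .a1 = 1) (ha2 : x .a2 = 1) (hb1 : x .b1 = 1) (hb2 : x .b2 = 1) :
    titsForm x = 4 + (∑ t ∈ Finset.range (n-3), zv x t ^ 2)
      - 2 * zv x 0 - 2 * zv x (n-4)
      - ∑ t ∈ Finset.range (n-4), zv x t * zv x (t+1) := by
  have hm : 0 < n - 3 := by omega
  have hm4 : n - 4 < n - 3 := by omega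
  unfold titsForm
  have hsq : (∑ v, x v ^ 2) = 4 + ∑ t ∈ Finset.range (n-3), zv x t ^ 2 := by
    rw [sum_decomp (fun v => x v ^ 2),
      ← Fin.sum_univ_eq_sum_range (fun t => zv x t ^ 2) (n-3)]
    simp only [ha1, ha2, hb1, hb2]
    have : ∀ k : Fin (n-3), x (.z k) ^ 2 = zv x k.val ^ 2 := fun k => by rw [zv_z x k]
    rw [Finset.sum_congr rfl (fun k _ => this k)]
    ring
  have e_a1 : (∑ v, if edgeO (DTildeVertex.a1 : DTildeVertex n) v
      then x .a1 * x v else 0) = zv x 0 := by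
    rw [sum_decomp]
    simp only [edgeO, Bool.false_eq_true, if_false, beq_iff_eq]
    rw [sum_fin_ite (n-3) (fun k => x .a1 * x (.z k)) 0, dif_pos hm]
    simp [zv, hm, ha1]
  have e_a2 : (∑ v, if edgeO (DTildeVertex.a2 : DTildeVertex n) v
      then x .a2 * x v else 0) = zv x 0 := by
    rw [sum_decomp]
    simp only [edgeO, Bool.false_eq_true, if_false, beq_iff_eq]
    rw [sum_fin_ite (n-3) (fun k => x .a2 * x (.z k)) 0, dif_pos hm]
    simp [zv, hm, ha2]
  have e_b1 : (∑ v, if edgeO (DTildeVertex.b1 : DTildeVertex n) v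
      then x .b1 * x v else 0) = 0 := by
    have h : ∀ v : DTildeVertex n, edgeO .b1 v = false := fun v => by cases v <;> rfl
    simp [h]
  have e_b2 : (∑ v, if edgeO (DTildeVertex.b2 : DTildeVertex n) v
      then x .b2 * x v else 0) = 0 := by
    have h : ∀ v : DTildeVertex n, edgeO .b2 v = false := fun v => by cases v <;> rfl
    simp [h]
  have e_z : ∀ k : Fin (n-3), (∑ v, if edgeO (DTildeVertex.z k) v
      then x (.z k) * x v else 0)
      = (if k.val = n-4 then 2 * zv x k.val else 0)
        + (if k.val + 1 < n-3 then zv x k.val * zv x (k.val+1) else 0) := by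
    intro k
    have hk := k.isLt
    rw [sum_decomp]
    simp only [edgeO, Bool.false_eq_true, if_false, beq_iff_eq]
    have hch : ∀ l : Fin (n-3), (if k.val + 1 = l.val then x (.z k) * x (.z l) else 0)
        = (if l.val = k.val + 1 then x (.z k) * x (.z l) else 0) := by
      intro l; split_ifs <;> first | rfl | (exfalso; omega)
    rw [Finset.sum_congr rfl (fun l _ => hch l),
      sum_fin_ite (n-3) (fun l => x (.z k) * x (.z l)) (k.val+1)]
    simp only [hb1, hb2, zv]
    split_ifs <;> first | ring1 | (exfalso; omega)
  have hedge : (∑ u, ∑ v, (if edgeO u v then x u * x v else 0))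
      = 2 * zv x 0 + 2 * zv x (n-4)
        + ∑ t ∈ Finset.range (n-4), zv x t * zv x (t+1) := by
    rw [sum_decomp (fun u => ∑ v, (if edgeO u v then x u * x v else 0))]
    simp only [e_a1, e_a2, e_b1, e_b2]
    rw [Finset.sum_congr rfl (fun k _ => e_z k), Finset.sum_add_distrib]
    have h1 : (∑ k : Fin (n-3), if k.val = n-4 then 2 * zv x k.val else 0)
        = 2 * zv x (n-4) := by
      rw [sum_fin_ite (n-3) (fun k => 2 * zv x k.val) (n-4), dif_pos hm4]
    have h2 : (∑ k : Fin (n-3), if k.val + 1 < n-3 then zv x k.val * zv x (k.val+1) else 0)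
        = ∑ t ∈ Finset.range (n-4), zv x t * zv x (t+1) := by
      rw [Fin.sum_univ_eq_sum_range (fun t => if t + 1 < n-3 then zv x t * zv x (t+1) else 0)
        (n-3)]
      rw [← Finset.sum_subset (Finset.range_subset_range.2 (by omega : n-4 ≤ n-3))
        (fun t _ ht => by rw [if_neg]; simp at ht; omega)]
      exact Finset.sum_congr rfl (fun t ht => by rw [if_pos]; simp at ht; omega)
    rw [h1, h2]
    ring
  rw [hsq, hedge]
  ring

lemma chain_identity (D : ℕ → ℤ) (p : ℕ) :
    4 + (∑ t ∈ Finset.range (p+1), D t ^ 2) - 2 * D 0 - 2 * D p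
      - ∑ t ∈ Finset.range p, D t * D (t+1)
    = ∑ t ∈ Finset.range (p+1),
        (if t = 0 then (2 - D 0)^2 else (2 - D t) * ((2 - D t) - (2 - D (t-1)))) := by
  induction p with
  | zero => simp; ring
  | succ p ih =>
      rw [Finset.sum_range_succ (fun t => D t ^ 2),
        Finset.sum_range_succ (fun t => D t * D (t+1)),
        Finset.sum_range_succ (fun t => if t = 0 then (2 - D 0)^2
          else (2 - D t) * ((2 - D t) - (2 - D (t-1))))]
      rw [if_neg (Nat.succ_ne_zero p), Nat.add_sub_cancel]
      linear_combination ih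

end DTildeAux
namespace DTildeAux
open Finset

/-- The `t`-th term measuring "run starts" of the pattern `2 - D`. -/
def Tt (D : ℕ → ℤ) (t : ℕ) : ℤ :=
  if t = 0 then (2 - D 0)^2 else (2 - D t) * ((2 - D t) - (2 - D (t-1)))

lemma chain_identity' (D : ℕ → ℤ) (p : ℕ) :
    4 + (∑ t ∈ Finset.range (p+1), D t ^ 2) - 2 * D 0 - 2 * D p
      - ∑ t ∈ Finset.range p, D t * D (t+1)
    = ∑ t ∈ Finset.range (p+1), Tt D t := by
  rw [chain_identity D p]
  exact Finset.sum_congr rfl (fun t _ => rfl)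

lemma interval_of_sum_one (m : ℕ) (hm : 1 ≤ m) (D : ℕ → ℤ)
    (hD : ∀ t, t < m → D t = 1 ∨ D t = 2)
    (hq : ∑ t ∈ Finset.range m, Tt D t = 1) :
    ∃ i j : ℕ, i ≤ j ∧ j ≤ m - 1 ∧ ∀ t, t < m → (D t = 1 ↔ (i ≤ t ∧ t ≤ j)) := by
  classical
  have hT01 : ∀ t, t < m → Tt D t = 0 ∨ Tt D t = 1 := by
    intro t ht
    rcases t with _ | s
    · rcases hD 0 (by omega) with h | h <;> simp [Tt, h] <;> norm_num
    · have h1 := hD (s+1) ht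
      have h2 := hD s (by omega)
      rcases h1 with h | h <;> rcases h2 with h' | h' <;>
        simp [Tt, h, h'] <;> norm_num
  obtain ⟨k0, hk0mem, hk0ne⟩ := Finset.exists_ne_zero_of_sum_ne_zero
    (by rw [hq]; exact one_ne_zero : ∑ t ∈ Finset.range m, Tt D t ≠ 0)
  have hk0lt : k0 < m := Finset.mem_range.1 hk0mem
  have hTk0 : Tt D k0 = 1 := by
    rcases hT01 k0 hk0lt with h | h
    · exact absurd h hk0ne
    · exact h
  have hzero : ∀ t, t < m → t ≠ k0 → Tt D t = 0 := by
    intro t ht htne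
    have hsum0 : ∑ s ∈ (Finset.range m).erase k0, Tt D s = 0 := by
      have h := Finset.add_sum_erase (Finset.range m) (Tt D) hk0mem
      rw [hq, hTk0] at h
      linarith
    have hnonneg : ∀ s ∈ (Finset.range m).erase k0, 0 ≤ Tt D s := by
      intro s hs
      rcases hT01 s (Finset.mem_range.1 (Finset.mem_of_mem_erase hs)) with h | h <;> omega
    exact (Finset.sum_eq_zero_iff_of_nonneg hnonneg).1 hsum0 t
      (Finset.mem_erase.2 ⟨htne, Finset.mem_range.2 ht⟩)
  have hDk0 : D k0 = 1 := by
    rcases hD k0 hk0lt with h | h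
    · exact h
    · exfalso
      rcases Nat.eq_zero_or_pos k0 with h0 | hpos0
      · have h' : D 0 = 2 := h0 ▸ h
        rw [Tt, if_pos h0, h'] at hTk0; norm_num at hTk0
      · rw [Tt, if_neg (by omega), h] at hTk0; norm_num at hTk0
  set P : ℕ → Prop := fun l => ∀ t, t ≤ l → k0 ≤ t → D t = 1 with hPdef
  have hPk0 : P k0 := by
    intro t h1 h2
    have : t = k0 := le_antisymm h1 h2
    rw [this]; exact hDk0
  have hk0le : k0 ≤ m - 1 := by omega
  have hjk0 : k0 ≤ Nat.findGreatest P (m-1) := Nat.le_findGreatest hk0le hPk0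
  set j := Nat.findGreatest P (m-1) with hjdef
  have hjle : j ≤ m - 1 := Nat.findGreatest_le _
  have hPj : P j := Nat.findGreatest_spec hk0le hPk0
  have hnext : j + 1 ≤ m - 1 → D (j+1) = 2 := by
    intro hj1
    have hnP : ¬ P (j+1) := by
      intro hP
      have := Nat.le_findGreatest hj1 hP
      omega
    rcases hD (j+1) (by omega) with h' | h'
    · exfalso
      apply hnP
      intro t h1 h2
      rcases Nat.lt_or_ge t (j+1) with h | h
      · exact hPj t (by omega) h2
      · have : t = j+1 := by omega
        rw [this]; exact h'
    · exact h'
  refine ⟨k0, j, hjk0, hjle, ?_⟩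
  intro t ht
  constructor
  · intro h1
    have hge : k0 ≤ t := by
      by_contra hlt
      push_neg at hlt
      have hex : ∃ s, D s = 1 ∧ s ≤ t := ⟨t, h1, le_refl t⟩
      obtain ⟨hD0, hle0⟩ := Nat.find_spec hex
      set t0 := Nat.find hex with ht0def
      have ht0lt : t0 < m := by omega
      have hTt0 : Tt D t0 = 1 := by
        rcases Nat.eq_zero_or_pos t0 with h0 | hpos0
        · have h0' : D 0 = 1 := h0 ▸ hD0
          rw [Tt, if_pos h0, h0']; norm_num
        · have hs : D (t0-1) = 2 := by
            have hmin : ¬ (D (t0-1) = 1 ∧ t0-1 ≤ t) := Nat.find_min hex (by omega)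
            rcases hD (t0-1) (by omega) with h' | h'
            · exact absurd ⟨h', by omega⟩ hmin
            · exact h'
          rw [Tt, if_neg (by omega), hD0, hs]; norm_num
      by_cases he : t0 = k0
      · omega
      · have := hzero t0 ht0lt he; omega
    have hlej : t ≤ j := by
      by_contra hgt
      push_neg at hgt
      have hex : ∃ s, (j < s ∧ D s = 1) ∧ s ≤ t := ⟨t, ⟨hgt, h1⟩, le_refl t⟩
      obtain ⟨⟨hj1, hD1⟩, hle1⟩ := Nat.find_spec hex
      set t1 := Nat.find hex with ht1def
      have ht1lt : t1 < m := by omega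
      rcases Nat.eq_or_lt_of_le (by omega : j+1 ≤ t1) with heq | hlt1
      · have h2' := hnext (by omega)
        rw [heq] at h2'
        omega
      · have hs : D (t1-1) = 2 := by
          have hmin : ¬ ((j < t1-1 ∧ D (t1-1) = 1) ∧ t1-1 ≤ t) :=
            Nat.find_min hex (by omega)
          rcases hD (t1-1) (by omega) with h' | h'
          · exact absurd ⟨⟨by omega, h'⟩, by omega⟩ hmin
          · exact h'
        have hTt1 : Tt D t1 = 1 := by
          rw [Tt, if_neg (by omega), hD1, hs]; norm_num
        by_cases he : t1 = k0
        · omega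
        · have := hzero t1 ht1lt he; omega
    exact ⟨hge, hlej⟩
  · intro ⟨h1, h2⟩
    exact hPj t h2 h1

end DTildeAux
namespace DTildeAux
open DTildeVertex Finset

variable {n : ℕ}

/-- The interval state: `1` at the four end vertices and on chain positions in
`[i, j]`, and `2` at the other chain positions. -/
def st (n i j : ℕ) : DTildeVertex n → ℤ
  | .z k => if i ≤ k.val ∧ k.val ≤ j then 1 else 2
  | _ => 1

lemma step_base (hn : 4 ≤ n) (j : ℕ) : cEven (st n 0 j) .a1 = 0 := by
  simp only [cEven, parity, Bool.false_eq_true, if_false, adjsum_a1 hn, st]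
  norm_num

set_option maxHeartbeats 1000000 in
lemma step_top (hn : 4 ≤ n) (i j : ℕ) (hij : i ≤ j) (hj : j = n-4)
    (hpar : n % 2 = i % 2) :
    (if i % 2 = 1 then cOdd else cEven) (st n i j) .b1 = 0 := by
  by_cases hi : i % 2 = 1
  · rw [if_pos hi]
    simp only [cOdd, parity, beq_iff_eq, adjsum_b1 hn, st]
    split_ifs <;> omega
  · rw [if_neg hi]
    simp only [cEven, parity, beq_iff_eq, adjsum_b1 hn, st]
    split_ifs <;> omega

set_option maxHeartbeats 4000000 in
lemma step_main (hn : 4 ≤ n) (i j : ℕ) (h1 : 1 ≤ i) (hij : i ≤ j) (hjm : j ≤ n-4)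
    (hno : ¬(j = n-4 ∧ j % 2 = i % 2)) :
    (if i % 2 = 1 then cOdd else cEven) (st n i j)
      = st n (i-1) (if j % 2 = i % 2 then j+1 else j-1) := by
  funext u
  by_cases hi : i % 2 = 1
  · rw [if_pos hi]
    cases u with
    | a1 => simp [cOdd, parity, st]
    | a2 => simp [cOdd, parity, st]
    | b1 =>
        simp only [cOdd, parity, beq_iff_eq, adjsum_b1 hn, st]
        split_ifs <;> omega
    | b2 =>
        simp only [cOdd, parity, beq_iff_eq, adjsum_b2 hn, st]
        split_ifs <;> omega
    | z k =>
        have hk := k.isLt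
        simp only [cOdd, parity, beq_iff_eq, adjsum_z hn, st, zv]
        split_ifs <;> omega
  · rw [if_neg hi]
    cases u with
    | a1 =>
        simp only [cEven, parity, Bool.false_eq_true, if_false, adjsum_a1 hn, st]
        split_ifs <;> omega
    | a2 =>
        simp only [cEven, parity, Bool.false_eq_true, if_false, adjsum_a2 hn, st]
        split_ifs <;> omega
    | b1 =>
        simp only [cEven, parity, beq_iff_eq, adjsum_b1 hn, st]
        split_ifs <;> omega
    | b2 =>
        simp only [cEven, parity, beq_iff_eq, adjsum_b2 hn, st]
        split_ifs <;> omega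
    | z k =>
        have hk := k.isLt
        simp only [cEven, parity, beq_iff_eq, adjsum_z hn, st, zv]
        split_ifs <;> omega

/-- Main induction: from an interval state one reaches a vector vanishing
somewhere, starting with the appropriate Coxeter reflection. -/
lemma reach (hn : 4 ≤ n) : ∀ i j : ℕ, i ≤ j → j ≤ n-4 →
    ∃ (k : ℕ) (v : DTildeVertex n),
      altIter (decide (i % 2 = 1)) k (st n i j) v = 0 := by
  intro i
  induction i with
  | zero =>
    intro j _ _
    refine ⟨1, .a1, ?_⟩
    have : (decide (0 % 2 = 1)) = false := by decide
    rw [this]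
    show cEven (st n 0 j) .a1 = 0
    exact step_base hn j
  | succ i ih =>
    intro j hij hj
    by_cases hcase : j = n-4 ∧ n % 2 = (i+1) % 2
    · refine ⟨1, .b1, ?_⟩
      have h1 : altIter (decide ((i+1) % 2 = 1)) 1 (st n (i+1) j)
          = (if (i+1) % 2 = 1 then cOdd else cEven) (st n (i+1) j) := by
        by_cases h : (i+1) % 2 = 1 <;> simp [altIter, h]
      rw [h1]
      exact step_top hn (i+1) j hij hcase.1 hcase.2
    · have hno : ¬(j = n-4 ∧ j % 2 = (i+1) % 2) := by
        intro ⟨h1', h2'⟩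
        exact hcase ⟨h1', by omega⟩
      obtain ⟨k, v, hkv⟩ := ih (if j % 2 = (i+1) % 2 then j+1 else j-1)
        (by split_ifs <;> omega) (by split_ifs with h <;> [skip; omega]; omega)
      refine ⟨k+1, v, ?_⟩
      show altIter (!decide ((i+1) % 2 = 1)) k
        ((if decide ((i+1) % 2 = 1) then cOdd else cEven) (st n (i+1) j)) v = 0
      have e1 : (!decide ((i+1) % 2 = 1)) = decide (i % 2 = 1) := by
        rcases Nat.mod_two_eq_zero_or_one i with h | h <;>
          simp [h, Nat.succ_mod_two_eq_one_iff, Nat.succ_mod_two_eq_zero_iff] <;> omega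
      have e2 : (if decide ((i+1) % 2 = 1) then cOdd else cEven) (st n (i+1) j)
          = st n i (if j % 2 = (i+1) % 2 then j+1 else j-1) := by
        have := step_main hn (i+1) j (by omega) hij hj hno
        simpa using this
      rw [e1, e2]
      simpa using hkv
end DTildeAux
open DTildeVertex in
/-- Every sincere positive real root `d ≤ δ` of the extended Dynkin graph `D̃ₙ`
can be carried by a finite alternating composition of the Coxeter reflections
`ĉ` and `č` to a vector vanishing at some vertex. -/
theorem DTilde_sincere_small_real_root_reaches_insincere
    (n : ℕ) (hn : 4 ≤ n) (d : DTildeVertex n → ℤ)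
    (hpos : ∀ v, 1 ≤ d v)
    (hroot : titsForm d = 1)
    (hle : ∀ v, d v ≤ delta v) :
    ∃ (b : Bool) (k : ℕ) (v : DTildeVertex n), altIter b k d v = 0 := by
  classical
  have hm : 0 < n - 3 := by omega
  have ha1 : d .a1 = 1 := le_antisymm (hle .a1) (hpos .a1)
  have ha2 : d .a2 = 1 := le_antisymm (hle .a2) (hpos .a2)
  have hb1 : d .b1 = 1 := le_antisymm (hle .b1) (hpos .b1)
  have hb2 : d .b2 = 1 := le_antisymm (hle .b2) (hpos .b2)
  have hD : ∀ t, t < n-3 → DTildeAux.zv d t = 1 ∨ DTildeAux.zv d t = 2 := by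
    intro t ht
    have h1 := hpos (.z ⟨t, ht⟩)
    have h2 := hle (.z ⟨t, ht⟩)
    simp only [delta] at h2
    simp only [DTildeAux.zv, dif_pos ht]
    omega
  have h43 : n - 3 = (n - 4) + 1 := by omega
  have hq : ∑ t ∈ Finset.range ((n-4)+1), DTildeAux.Tt (DTildeAux.zv d) t = 1 := by
    rw [← DTildeAux.chain_identity' (DTildeAux.zv d) (n-4), ← h43,
      ← DTildeAux.titsForm_eq hn d ha1 ha2 hb1 hb2]
    exact hroot
  obtain ⟨i, j, hij, hjle, hiff⟩ := DTildeAux.interval_of_sum_one (n-3) (by omega)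
    (DTildeAux.zv d) hD (by rw [h43]; exact hq)
  have hstd : d = DTildeAux.st n i j := by
    funext v
    cases v with
    | a1 => exact ha1
    | a2 => exact ha2
    | b1 => exact hb1
    | b2 => exact hb2
    | z k =>
      have hk := k.isLt
      rw [DTildeAux.zv_z d k]
      simp only [DTildeAux.st]
      split_ifs with h
      · exact (hiff k.val hk).2 h
      · rcases hD k.val hk with h' | h'
        · exact absurd ((hiff k.val hk).1 h') h
        · exact h'
  obtain ⟨k, v, hkv⟩ := DTildeAux.reach hn i j hij (by omega)
  exact ⟨decide (i % 2 = 1), k, v, by rw [hstd]; exact hkv⟩
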